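/- If (RG)^- is anticommutative and G is nonabelian, then G has a unique nontrivial commutator s, s lies in Z(G) ∩ G_*, s² = 1, and x^* ∈ {x, sx} for all x ∈ G. -/

import Mathlib

open Finsupp

open scoped Classical

/-- The generalized oriented map σ* on the group ring RG. -/
noncomputable def sigmaStar {R : Type} [CommRing R] {G : Type} [Group G]
    (inv : G → G) (σ : G →* Rˣ) (α : MonoidAlgebra R G) : MonoidAlgebra R G :=
  α.coeff.sum fun x a => MonoidAlgebra.single (inv x) ((σ x : R) * a)

/-- The set of skew-symmetric elements of RG under σ*. -/
def skewSet {R : Type} [CommRing R] {G : Type} [Group G]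
    (inv : G → G) (σ : G →* Rˣ) : Set (MonoidAlgebra R G) :=
  {α | sigmaStar inv σ α = -α}

section Aux
variable {R : Type} [CommRing R] {G : Type} [Group G]

lemma sigmaStar_single (inv : G → G) (σ : G →* Rˣ) (x : G) (c : R) :
    sigmaStar inv σ (MonoidAlgebra.single x c) = MonoidAlgebra.single (inv x) ((σ x : R) * c) := by
  unfold sigmaStar
  rw [MonoidAlgebra.coeff_single, Finsupp.sum_single_index]
  simp

lemma sigmaStar_sub (inv : G → G) (σ : G →* Rˣ) (α β : MonoidAlgebra R G) :
    sigmaStar inv σ (α - β) = sigmaStar inv σ α - sigmaStar inv σ β := by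
  unfold sigmaStar
  rw [MonoidAlgebra.coeff_sub, Finsupp.sum_sub_index]
  intro a b₁ b₂
  rw [mul_sub, MonoidAlgebra.single_sub]

lemma mem_skew_alpha (inv : G → G) (σ : G →* Rˣ) (hinv : ∀ x, inv (inv x) = x)
    (hcompat : ∀ x : G, x * inv x ∈ σ.ker) (x : G) :
    (MonoidAlgebra.single x 1 - MonoidAlgebra.single (inv x) ((σ x : R))) ∈ skewSet inv σ := by
  have hc : (σ (inv x) : R) * (σ x : R) = 1 := by
    have h := hcompat x
    rw [MonoidHom.mem_ker] at h
    have : σ x * σ (inv x) = 1 := by rw [← map_mul, h]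
    have := congrArg (Units.val) this
    push_cast at this
    rw [mul_comm] at this
    exact_mod_cast this
  show sigmaStar inv σ _ = _
  rw [sigmaStar_sub, sigmaStar_single, sigmaStar_single, hinv, mul_one, hc]
  abel

lemma mem_skew_single (inv : G → G) (σ : G →* Rˣ) (w : G) (hw : inv w = w) (c : R)
    (hc : (σ w : R) * c = -c) : (MonoidAlgebra.single w c : MonoidAlgebra R G) ∈ skewSet inv σ := by
  show sigmaStar inv σ _ = _
  rw [sigmaStar_single, hw, hc, MonoidAlgebra.single_neg]

/-- Master coefficient identity from anticommutativity of the α's. -/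
lemma keyEq (inv : G → G) (σ : G →* Rˣ) (hinv : ∀ x, inv (inv x) = x)
    (hcompat : ∀ x : G, x * inv x ∈ σ.ker)
    (hanti : ∀ α ∈ skewSet inv σ, ∀ β ∈ skewSet inv σ, α * β + β * α = 0)
    (x y g : G) :
    (if x * y = g then (1:R) else 0) - (if x * inv y = g then (σ y : R) else 0)
    - (if inv x * y = g then (σ x : R) else 0)
    + (if inv x * inv y = g then (σ x : R) * (σ y : R) else 0)
    + (if y * x = g then (1:R) else 0) - (if y * inv x = g then (σ x : R) else 0)
    - (if inv y * x = g then (σ y : R) else 0)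
    + (if inv y * inv x = g then (σ y : R) * (σ x : R) else 0) = 0 := by
  have H := hanti _ (mem_skew_alpha inv σ hinv hcompat x) _ (mem_skew_alpha inv σ hinv hcompat y)
  have Hexp : (MonoidAlgebra.single (x*y) (1:R) - MonoidAlgebra.single (x*inv y) ((σ y : R))
      - MonoidAlgebra.single (inv x*y) ((σ x : R)) + MonoidAlgebra.single (inv x*inv y) ((σ x : R)*(σ y : R)))
      + (MonoidAlgebra.single (y*x) (1:R) - MonoidAlgebra.single (y*inv x) ((σ x : R))
      - MonoidAlgebra.single (inv y*x) ((σ y : R)) + MonoidAlgebra.single (inv y*inv x) ((σ y : R)*(σ x : R)))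
      = 0 := by
    rw [← H]
    simp only [sub_mul, mul_sub, MonoidAlgebra.single_mul_single, one_mul, mul_one]
    abel
  have h2 := congrArg (fun f : MonoidAlgebra R G => f.coeff g) Hexp
  simp only [MonoidAlgebra.coeff_sub, MonoidAlgebra.coeff_add, MonoidAlgebra.coeff_single, MonoidAlgebra.coeff_zero, Finsupp.sub_apply, Finsupp.add_apply, Finsupp.single_apply, Finsupp.zero_apply] at h2
  linear_combination h2

/-- Coefficient identity pairing a skew single with an α. -/
lemma keyEq2 (inv : G → G) (σ : G →* Rˣ) (hinv : ∀ x, inv (inv x) = x)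
    (hcompat : ∀ x : G, x * inv x ∈ σ.ker)
    (hanti : ∀ α ∈ skewSet inv σ, ∀ β ∈ skewSet inv σ, α * β + β * α = 0)
    (w : G) (hw : inv w = w) (c : R) (hc : (σ w : R) * c = -c) (a g : G) :
    (if w * a = g then c else 0) - (if w * inv a = g then c * (σ a : R) else 0)
    + (if a * w = g then c else 0) - (if inv a * w = g then (σ a : R) * c else 0) = 0 := by
  have H := hanti _ (mem_skew_single inv σ w hw c hc) _ (mem_skew_alpha inv σ hinv hcompat a)
  have Hexp : (MonoidAlgebra.single (w*a) c - MonoidAlgebra.single (w*inv a) (c * (σ a : R)))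
      + (MonoidAlgebra.single (a*w) c - MonoidAlgebra.single (inv a*w) ((σ a : R) * c)) = 0 := by
    rw [← H]
    simp only [sub_mul, mul_sub, MonoidAlgebra.single_mul_single, one_mul, mul_one]
  have h2 := congrArg (fun f : MonoidAlgebra R G => f.coeff g) Hexp
  simp only [MonoidAlgebra.coeff_sub, MonoidAlgebra.coeff_add, MonoidAlgebra.coeff_single, MonoidAlgebra.coeff_zero, Finsupp.sub_apply, Finsupp.add_apply, Finsupp.single_apply, Finsupp.zero_apply] at h2
  linear_combination h2

/-- No symmetric element can have σ-value -1. -/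
lemma negKill (inv : G → G) (σ : G →* Rˣ)
    (hanti : ∀ α ∈ skewSet inv σ, ∀ β ∈ skewSet inv σ, α * β + β * α = 0)
    (h2 : (2:R) ≠ 0) (w : G) (hw : inv w = w) (hσ : (σ w : R) = -1) : False := by
  have hsk : (MonoidAlgebra.single w (1:R) : MonoidAlgebra R G) ∈ skewSet inv σ :=
    mem_skew_single inv σ w hw 1 (by rw [hσ]; ring)
  have H := hanti _ hsk _ hsk
  have Hexp : (MonoidAlgebra.single (w*w) (1:R) : MonoidAlgebra R G) + MonoidAlgebra.single (w*w) 1 = 0 := by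
    rw [← H]
    simp only [MonoidAlgebra.single_mul_single, one_mul]
  have h3 := congrArg (fun f : MonoidAlgebra R G => f.coeff (w*w)) Hexp
  simp only [MonoidAlgebra.coeff_add, MonoidAlgebra.coeff_single, MonoidAlgebra.coeff_zero, Finsupp.add_apply, Finsupp.single_apply, eq_self_iff_true, if_true, Finsupp.zero_apply] at h3
  exact h2 (by linear_combination h3)

end Aux

set_option maxHeartbeats 4000000 in
theorem stmt16 {R : Type} [CommRing R] (hchar : ringChar R ≠ 2) {G : Type} [Group G]
    (inv : G → G) (hmul : ∀ x y : G, inv (x * y) = inv y * inv x)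
    (hinv : ∀ x : G, inv (inv x) = x) (σ : G →* Rˣ) (hnt : σ ≠ 1)
    (hcompat : ∀ x : G, x * inv x ∈ σ.ker)
    (hanti : ∀ α ∈ skewSet inv σ, ∀ β ∈ skewSet inv σ, α * β + β * α = 0)
    (hnab : ¬ ∀ a b : G, a * b = b * a) :
    ∃ s : G, s ≠ 1 ∧ (commutator G : Set G) = {1, s} ∧
      s ∈ Subgroup.center G ∧ inv s = s ∧ s ^ 2 = 1 ∧
      ∀ x : G, inv x = x ∨ inv x = s * x := by
  classical
  -- Ring facts
  have F0 : (1:R) ≠ 0 := by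
    intro h
    apply hnt
    have : Subsingleton R := subsingleton_of_zero_eq_one h.symm
    ext g
    exact Subsingleton.elim _ _
  haveI : Nontrivial R := ⟨1, 0, F0⟩
  have F1 : (2:R) ≠ 0 := by
    intro h
    have hd : ringChar R ∣ 2 := ringChar.dvd h
    rcases (Nat.prime_two).eq_one_or_self_of_dvd _ hd with h1 | h2
    · have : (1:R) = 0 := by
        have := ringChar.spec R 1
        rw [h1] at this
        simpa using this.mpr ⟨1, rfl⟩
      exact F0 this
    · exact hchar h2
  have KE := keyEq inv σ hinv hcompat hanti
  have KE2 := keyEq2 inv σ hinv hcompat hanti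
  have NEG := negKill inv σ hanti F1
  have unitne : ∀ a : G, (σ a : R) ≠ 0 := fun a => Units.ne_zero (σ a)
  have unitcancel : ∀ (a : G) (r : R), (σ a : R) * r = 0 → r = 0 := by
    intro a r h
    have h2 : ((↑((σ a)⁻¹) : R)) * ((σ a : R) * r) = 0 := by rw [h, mul_zero]
    rwa [← mul_assoc, Units.inv_mul, one_mul] at h2
  -- L1 facts
  have L1a : ∀ a : G, a * inv a = inv a * a := by
    intro a
    by_contra h
    have E := KE a a (a * inv a)
    have c1 : ¬ (a * a = a * inv a) := by
      intro hc
      exact h (by rw [← mul_left_cancel hc])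
    have c4 : ¬ (inv a * inv a = a * inv a) := by
      intro hc
      have : inv a = a := mul_right_cancel hc
      exact h (by rw [this])
    have c3 : ¬ (inv a * a = a * inv a) := fun hc => h hc.symm
    rw [if_neg c1, if_pos rfl, if_neg c3, if_neg c4] at E
    have : (σ a : R) * 2 = 0 := by linear_combination -E
    exact F1 (unitcancel _ _ this)
  have L1b : ∀ a : G, inv a * inv a = a * a := by
    intro a
    by_contra h
    have E := KE a a (a * a)
    have c2 : ¬ (a * inv a = a * a) := by
      intro hc
      have h2 : inv a = a := mul_left_cancel hc
      exact h (by rw [h2])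
    have c3 : ¬ (inv a * a = a * a) := by
      intro hc
      have h2 : inv a = a := mul_right_cancel hc
      exact h (by rw [h2])
    rw [if_pos rfl, if_neg c2, if_neg c3, if_neg h] at E
    have : (2:R) = 0 := by linear_combination E
    exact F1 this
  -- basic inv facts
  have inv_one : inv (1:G) = 1 := by
    have h := hmul 1 1
    rw [one_mul] at h
    have h2 : inv 1 * 1 = inv 1 * inv 1 := by rw [mul_one, ← h]
    exact (mul_left_cancel h2).symm
  have inv_inv' : ∀ a : G, inv (a⁻¹) = (inv a)⁻¹ := by
    intro a
    have h := hmul a a⁻¹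
    rw [mul_inv_cancel, inv_one] at h
    exact eq_inv_of_mul_eq_one_left h.symm
  -- σ value facts
  have σmul : ∀ a b : G, (σ (a*b) : R) = (σ a : R) * (σ b : R) := by
    intro a b; rw [map_mul]; push_cast; ring
  have σcomp : ∀ a : G, (σ a : R) * (σ (inv a) : R) = 1 := by
    intro a
    have h := hcompat a
    rw [MonoidHom.mem_ker] at h
    have h2 : σ a * σ (inv a) = 1 := by rw [← map_mul, h]
    have h3 := congrArg Units.val h2
    push_cast at h3
    exact h3
  -- s-element facts
  have sCommX : ∀ a : G, (a⁻¹ * inv a) * a = inv a ∧ a * (a⁻¹ * inv a) = inv a := by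
    intro a
    constructor
    · have h := L1a a
      calc a⁻¹ * inv a * a = a⁻¹ * (inv a * a) := by group
        _ = a⁻¹ * (a * inv a) := by rw [← h]
        _ = inv a := by group
    · group
  have sInvol : ∀ a : G, (a⁻¹ * inv a) * (a⁻¹ * inv a) = 1 := by
    intro a
    have h1 : inv a * a⁻¹ = a⁻¹ * inv a := by
      have h := L1a a
      have h2 : a * (inv a * a⁻¹ * a) = a * (a⁻¹ * inv a * a) := by
        calc a * (inv a * a⁻¹ * a) = (a * inv a) * (a⁻¹ * a) := by group
          _ = a * inv a := by group
          _ = inv a * a := h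
          _ = (a * a⁻¹) * (inv a * a) := by group
          _ = a * (a⁻¹ * inv a * a) := by group
      exact mul_right_cancel (mul_left_cancel h2)
    calc (a⁻¹ * inv a) * (a⁻¹ * inv a) = a⁻¹ * (inv a * a⁻¹) * inv a := by group
      _ = a⁻¹ * (a⁻¹ * inv a) * inv a := by rw [h1]
      _ = a⁻¹ * a⁻¹ * (inv a * inv a) := by group
      _ = a⁻¹ * a⁻¹ * (a * a) := by rw [L1b]
      _ = 1 := by group
  have four0 : (∃ w : G, inv w ≠ w) → (4:R) = 0 := by
    rintro ⟨w, hw⟩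
    have E := KE w w (w * inv w)
    have c1 : ¬ (w * w = w * inv w) := fun hc => hw (mul_left_cancel hc).symm
    have c3 : inv w * w = w * inv w := (L1a w).symm
    have c4 : ¬ (inv w * inv w = w * inv w) := by
      intro hc
      rw [L1b w] at hc
      exact hw (mul_left_cancel hc).symm
    rw [if_neg c1, if_pos rfl, if_pos c3, if_neg c4] at E
    have : (σ w : R) * 4 = 0 := by linear_combination -E
    exact unitcancel _ _ this
  have sA : ∀ a : G, (a⁻¹ * inv a) * a = inv a := fun a => (sCommX a).1
  have sB : ∀ a : G, a * (a⁻¹ * inv a) = inv a := fun a => (sCommX a).2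
  have sAlt : ∀ a : G, inv a * a⁻¹ = a⁻¹ * inv a := by
    intro a
    have h := L1a a
    have h2 : a * (inv a * a⁻¹ * a) = a * (a⁻¹ * inv a * a) := by
      calc a * (inv a * a⁻¹ * a) = (a * inv a) * (a⁻¹ * a) := by group
        _ = a * inv a := by group
        _ = inv a * a := h
        _ = (a * a⁻¹) * (inv a * a) := by group
        _ = a * (a⁻¹ * inv a * a) := by group
    exact mul_right_cancel (mul_left_cancel h2)
  have sOne : ∀ a : G, a⁻¹ * inv a = 1 → inv a = a := by
    intro a h
    have : a * (a⁻¹ * inv a) = a * 1 := by rw [h]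
    rw [sB, mul_one] at this
    exact this
  -- Lemma C : commuting pair with both nonsymmetric
  have lemC : ∀ a b : G, a * b = b * a → inv a ≠ a → inv b ≠ b →
      a⁻¹ * inv a = b⁻¹ * inv b := by
    intro a b hcomm ha hb
    by_contra hst
    have E := KE a b (a*b)
    have c2 : ¬ (a * inv b = a * b) := fun hc => hb (mul_left_cancel hc)
    have c3 : ¬ (inv a * b = a * b) := fun hc => ha (mul_right_cancel hc)
    have c4 : ¬ (inv a * inv b = a * b) := by
      intro hc
      apply hst
      have hsb : (a⁻¹ * inv a) * inv b = b := by
        calc (a⁻¹ * inv a) * inv b = a⁻¹ * (inv a * inv b) := by group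
          _ = a⁻¹ * (a * b) := by rw [hc]
          _ = b := by group
      have htb : (b⁻¹ * inv b) * inv b = b := by
        calc (b⁻¹ * inv b) * inv b = b⁻¹ * (inv b * inv b) := by group
          _ = b⁻¹ * (b * b) := by rw [L1b]
          _ = b := by group
      exact mul_right_cancel (hsb.trans htb.symm)
    have c6 : ¬ (b * inv a = a * b) := by
      intro hc
      rw [hcomm] at hc
      exact ha (mul_left_cancel hc)
    have c7 : ¬ (inv b * a = a * b) := by
      intro hc
      rw [hcomm] at hc
      exact hb (mul_right_cancel hc)
    have c8 : ¬ (inv b * inv a = a * b) := by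
      intro hc
      apply hst
      have hta : (b⁻¹ * inv b) * inv a = a := by
        calc (b⁻¹ * inv b) * inv a = b⁻¹ * (inv b * inv a) := by group
          _ = b⁻¹ * (b * a) := by rw [hc, hcomm]
          _ = a := by group
      have hsa : (a⁻¹ * inv a) * inv a = a := by
        calc (a⁻¹ * inv a) * inv a = a⁻¹ * (inv a * inv a) := by group
          _ = a⁻¹ * (a * a) := by rw [L1b]
          _ = a := by group
      exact (mul_right_cancel (hsa.trans hta.symm))
    rw [if_pos rfl, if_neg c2, if_neg c3, if_neg c4, if_pos hcomm.symm, if_neg c6,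
      if_neg c7, if_neg c8] at E
    exact F1 (by linear_combination E)
  -- Lemma C2
  have lemC2 : ∀ a b : G, a * b = b * a → inv a ≠ a →
      (a⁻¹ * inv a) * b = b * (a⁻¹ * inv a) := by
    intro a b hcomm ha
    have hc' : a⁻¹ * b = b * a⁻¹ := by
      have h2 : a * ((a⁻¹ * b) * a) = a * ((b * a⁻¹) * a) := by
        calc a * ((a⁻¹ * b) * a) = b * a := by group
          _ = a * b := hcomm.symm
          _ = a * ((b * a⁻¹) * a) := by group
      exact mul_right_cancel (mul_left_cancel h2)
    by_cases hb : inv b = b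
    · -- direct route via z = a*b
      have h1 : (a*b)⁻¹ * inv (a*b) = a⁻¹ * inv a := by
        calc (a*b)⁻¹ * inv (a*b) = b⁻¹ * (a⁻¹ * b) * inv a := by
              rw [hmul, hb]; group
          _ = b⁻¹ * (b * a⁻¹) * inv a := by rw [hc']
          _ = a⁻¹ * inv a := by group
      have h2 : inv (a*b) * (a*b)⁻¹ = a⁻¹ * inv a := by rw [sAlt, h1]
      have h3 : b * inv a = inv a * b := by
        have h4 : (b * inv a) * (b⁻¹ * a⁻¹) = a⁻¹ * inv a := by
          calc (b * inv a) * (b⁻¹ * a⁻¹) = inv (a*b) * (a*b)⁻¹ := by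
                rw [hmul, hb]; group
            _ = a⁻¹ * inv a := h2
        have h5 : b * inv a * b⁻¹ = inv a := by
          have h6 : (b * inv a) * (b⁻¹ * a⁻¹) * a = (a⁻¹ * inv a) * a := by rw [h4]
          rw [sA] at h6
          calc b * inv a * b⁻¹ = (b * inv a) * (b⁻¹ * a⁻¹) * a := by group
            _ = inv a := h6
        calc b * inv a = (b * inv a * b⁻¹) * b := by group
          _ = inv a * b := by rw [h5]
      calc (a⁻¹ * inv a) * b = a⁻¹ * (inv a * b) := by group
        _ = a⁻¹ * (b * inv a) := by rw [h3]
        _ = (a⁻¹ * b) * inv a := by group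
        _ = (b * a⁻¹) * inv a := by rw [hc']
        _ = b * (a⁻¹ * inv a) := by group
    · have hst := lemC a b hcomm ha hb
      rw [hst]
      rw [show (b⁻¹ * inv b) * b = b * (b⁻¹ * inv b) from (sA b).trans (sB b).symm]
  -- Lemma N2
  have lemN2 : ∀ a b : G, a * b ≠ b * a → inv a ≠ a → inv b = b → a * b = b * inv a := by
    intro a b hne ha hb
    by_cases hP : b * inv a = a * b
    · exact hP.symm
    exfalso
    have c3 : ¬ (inv a * b = a * b) := fun hc => ha (mul_right_cancel hc)
    have E := KE a b (a*b)
    rw [if_pos rfl, if_pos (by rw [hb]), if_neg c3,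
      if_neg (show ¬ (inv a * inv b = a*b) by rw [hb]; exact c3),
      if_neg (fun hc => hne hc.symm), if_neg hP,
      if_neg (show ¬ (inv b * a = a*b) by rw [hb]; exact fun hc => hne hc.symm),
      if_neg (show ¬ (inv b * inv a = a*b) by rw [hb]; exact hP)] at E
    have δ1 : (σ b : R) = 1 := by linear_combination -E
    have h4 : (4:R) = 0 := four0 ⟨a, ha⟩
    have hc2 : (σ b : R) * 2 = -2 := by rw [δ1]; linear_combination h4
    have E2 := KE2 b hb 2 hc2 a (a*b)
    rw [if_neg (fun hc => hne hc.symm), if_neg hP, if_pos rfl, if_neg c3] at E2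
    exact F1 (by linear_combination E2)
  -- Lemma EQ
  have lemEQ : ∀ a b : G, a * b ≠ b * a → inv a ≠ a → a⁻¹ * inv a = b⁻¹ * inv b →
      (a * b = b * inv a) ∨ ((σ a : R) * (σ b : R) = -1 ∧ (σ a : R) + (σ b : R) = 0) := by
    intro a b hne ha hss
    have hbne : inv b ≠ b := by
      intro hb
      apply ha
      apply sOne
      rw [hss, hb, inv_mul_cancel]
    have hsb2 : (a⁻¹ * inv a) * b = inv b := by rw [hss]; exact sA b
    have hsb : b * (a⁻¹ * inv a) = inv b := by rw [hss]; exact sB b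
    have hsinva : (a⁻¹ * inv a) * inv a = a := by
      calc (a⁻¹ * inv a) * inv a = a⁻¹ * (inv a * inv a) := by group
        _ = a⁻¹ * (a * a) := by rw [L1b]
        _ = a := by group
    have hinvb_a : inv b * inv a = b * a := by
      calc inv b * inv a = (b * (a⁻¹ * inv a)) * inv a := by rw [hsb]
        _ = b * ((a⁻¹ * inv a) * inv a) := by group
        _ = b * a := by rw [hsinva]
    by_cases hP : b * inv a = a * b
    · exact Or.inl hP.symm
    right
    have c4 : inv a * inv b = a * b := by
      have : inv a * inv b = a * ((a⁻¹ * inv a) * (a⁻¹ * inv a)) * b := by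
        rw [← sB a, ← hsb2]; group
      rw [this, sInvol, mul_one]
    have c7 : ¬ (inv b * a = a * b) := by
      intro hc
      apply hP
      have : inv b * a = b * inv a := by
        calc inv b * a = (b * (a⁻¹ * inv a)) * a := by rw [hsb]
          _ = b * ((a⁻¹ * inv a) * a) := by group
          _ = b * inv a := by rw [sA]
      rw [← this]; exact hc
    have E := KE a b (a*b)
    rw [if_pos rfl, if_neg (fun hc => hbne (mul_left_cancel hc)),
      if_neg (fun hc => ha (mul_right_cancel hc)), if_pos c4,
      if_neg (fun hc => hne hc.symm), if_neg hP, if_neg c7,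
      if_neg (show ¬ (inv b * inv a = a*b) by rw [hinvb_a]; exact fun hc => hne hc.symm)] at E
    constructor
    · linear_combination E
    -- second coefficient equation at a * inv b
    have c3' : inv a * b = a * inv b := by
      calc inv a * b = (a * (a⁻¹ * inv a)) * b := by rw [sB]
        _ = a * ((a⁻¹ * inv a) * b) := by group
        _ = a * inv b := by rw [hsb2]
    have hainvb : a * inv b = (a * b) * (a⁻¹ * inv a) := by
      calc a * inv b = a * (b * (a⁻¹ * inv a)) := by rw [hsb]
        _ = (a * b) * (a⁻¹ * inv a) := by group
    have hbinva : b * inv a = (b * a) * (a⁻¹ * inv a) := by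
      calc b * inv a = b * ((a⁻¹ * inv a) * a) := by rw [sA]
        _ = b * (a⁻¹ * inv a) * a := by group
        _ = inv b * a := by rw [hsb]
        _ = (b * (a⁻¹ * inv a)) * a := by rw [hsb]
        _ = (b * a) * (a⁻¹ * inv a) := by
              have hcomm2 : (a⁻¹ * inv a) * a = a * (a⁻¹ * inv a) := (sA a).trans (sB a).symm
              calc (b * (a⁻¹ * inv a)) * a = b * ((a⁻¹ * inv a) * a) := by group
                _ = b * (a * (a⁻¹ * inv a)) := by rw [hcomm2]
                _ = (b * a) * (a⁻¹ * inv a) := by group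
    have c5' : ¬ (b * a = a * inv b) := by
      intro hc
      apply hP
      calc b * inv a = (b * a) * (a⁻¹ * inv a) := hbinva
        _ = (a * inv b) * (a⁻¹ * inv a) := by rw [hc]
        _ = ((a * b) * (a⁻¹ * inv a)) * (a⁻¹ * inv a) := by rw [hainvb]
        _ = (a * b) * ((a⁻¹ * inv a) * (a⁻¹ * inv a)) := by group
        _ = a * b := by rw [sInvol, mul_one]
    have c6' : ¬ (b * inv a = a * inv b) := by
      intro hc
      apply hne
      rw [hbinva, hainvb] at hc
      exact (mul_right_cancel hc).symm
    have E2 := KE a b (a * inv b)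
    rw [if_neg (fun hc => hbne (mul_left_cancel hc).symm), if_pos rfl, if_pos c3',
      if_neg (show ¬ (inv a * inv b = a * inv b) from fun hc => ha (mul_right_cancel hc)),
      if_neg c5', if_neg c6',
      if_neg (show ¬ (inv b * a = a * inv b) by
        intro hc
        have hEq : inv b * a = b * inv a := by
          calc inv b * a = (b * (a⁻¹ * inv a)) * a := by rw [hsb]
            _ = b * ((a⁻¹ * inv a) * a) := by group
            _ = b * inv a := by rw [sA]
        exact c6' (hEq.symm.trans hc)),
      if_neg (show ¬ (inv b * inv a = a * inv b) by rw [hinvb_a]; exact c5')] at E2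
    linear_combination -E2
  have sSelfInv : ∀ a : G, (a⁻¹ * inv a)⁻¹ = a⁻¹ * inv a :=
    fun a => inv_eq_of_mul_eq_one_right (sInvol a)
  -- Lemma N1 : noncommuting pair with both nonsymmetric have equal s-values
  have lemN1 : ∀ x y : G, x * y ≠ y * x → inv x ≠ x → inv y ≠ y →
      x⁻¹ * inv x = y⁻¹ * inv y := by
    intro x y hxy hx hy
    by_contra hst
    have m1 : inv x * inv y = x * y → False := by
      intro hc
      apply hst
      have h1 : (x⁻¹ * inv x) * inv y = y := by
        calc (x⁻¹ * inv x) * inv y = x⁻¹ * (inv x * inv y) := by group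
          _ = x⁻¹ * (x * y) := by rw [hc]
          _ = y := by group
      have h2 : (y⁻¹ * inv y) * inv y = y := by
        calc (y⁻¹ * inv y) * inv y = y⁻¹ * (inv y * inv y) := by group
          _ = y⁻¹ * (y * y) := by rw [L1b]
          _ = y := by group
      exact mul_right_cancel (h1.trans h2.symm)
    have m2 : inv y * inv x = y * x → False := by
      intro hc
      apply hst
      have h1 : (y⁻¹ * inv y) * inv x = x := by
        calc (y⁻¹ * inv y) * inv x = y⁻¹ * (inv y * inv x) := by group
          _ = y⁻¹ * (y * x) := by rw [hc]
          _ = x := by group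
      have h2 : (x⁻¹ * inv x) * inv x = x := by
        calc (x⁻¹ * inv x) * inv x = x⁻¹ * (inv x * inv x) := by group
          _ = x⁻¹ * (x * x) := by rw [L1b]
          _ = x := by group
      exact mul_right_cancel (h2.trans h1.symm)
    by_cases hA3 : y * inv x = x * y
    · -- CASE A3
      have hix1 : inv x = y⁻¹ * (x * y) := by rw [← hA3]; group
      have KB2 : x * inv y = y * x → False := by
        intro hB2
        apply hst
        have hiyB : inv y = x⁻¹ * (y * x) := by rw [← hB2]; group
        have h1 : (x⁻¹ * inv x)⁻¹ = y⁻¹ * inv y := by rw [hix1, hiyB]; group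
        exact (sSelfInv x).symm.trans h1
      by_cases hB2 : x * inv y = y * x
      · exact KB2 hB2
      by_cases hB3 : inv x * y = y * x
      · -- LONG PATH P1
        have hix2 : inv x = (y * x) * y⁻¹ := by rw [← hB3]; group
        have hyy : x * (y*y) = (y*y) * x := by
          have h := hix1.symm.trans hix2
          calc x * (y*y) = y * (y⁻¹ * (x * y)) * y := by group
            _ = y * ((y * x) * y⁻¹) * y := by rw [h]
            _ = (y*y) * x := by group
        have hyy' : (y*y) * x⁻¹ = x⁻¹ * (y*y) := by
          calc (y*y) * x⁻¹ = x⁻¹ * (x * (y*y)) * x⁻¹ := by group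
            _ = x⁻¹ * ((y*y) * x) * x⁻¹ := by rw [hyy]
            _ = x⁻¹ * (y*y) := by group
        have hA : y * x⁻¹ * y⁻¹ = y⁻¹ * x⁻¹ * y := by
          calc y * x⁻¹ * y⁻¹ = y⁻¹ * ((y*y) * x⁻¹) * y⁻¹ := by group
            _ = y⁻¹ * (x⁻¹ * (y*y)) * y⁻¹ := by rw [hyy']
            _ = y⁻¹ * x⁻¹ * y := by group
        have h5 : y * (x⁻¹ * inv x) * y⁻¹ = (x⁻¹ * inv x)⁻¹ := by
          rw [hix1]
          calc y * (x⁻¹ * (y⁻¹ * (x * y))) * y⁻¹ = (y * x⁻¹ * y⁻¹) * x := by group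
            _ = (y⁻¹ * x⁻¹ * y) * x := by rw [hA]
            _ = (x⁻¹ * (y⁻¹ * (x * y)))⁻¹ := by group
        have h6 : y * (x⁻¹ * inv x) * y⁻¹ = x⁻¹ * inv x := h5.trans (sSelfInv x)
        have hsy : (x⁻¹ * inv x) * y = y * (x⁻¹ * inv x) := by
          have h7 : y * (x⁻¹ * inv x) = (x⁻¹ * inv x) * y := by
            calc y * (x⁻¹ * inv x) = (y * (x⁻¹ * inv x) * y⁻¹) * y := by group
              _ = (x⁻¹ * inv x) * y := by rw [h6]
          exact h7.symm
        have c3kill : inv x * y = x * inv y → False := by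
          intro hc
          apply hst
          have h1 : x * ((x⁻¹ * inv x) * y) = x * (y * (y⁻¹ * inv y)) := by
            calc x * ((x⁻¹ * inv x) * y) = (x * (x⁻¹ * inv x)) * y := by group
              _ = inv x * y := by rw [sB]
              _ = x * inv y := hc
              _ = x * (y * (y⁻¹ * inv y)) := by rw [sB y]
          have h2 := mul_left_cancel h1
          exact mul_left_cancel (hsy.symm.trans h2)
        have kQ1 : y * x = x * inv y → False := by
          intro hc
          apply hst
          have hiyQ : x⁻¹ * (y * x) = inv y := by rw [hc]; group
          have h1 : (x⁻¹ * inv x)⁻¹ = y⁻¹ * inv y := by rw [hix1, ← hiyQ]; group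
          exact (sSelfInv x).symm.trans h1
        by_cases hQ3 : inv y * inv x = x * inv y
        · by_cases hQ2 : inv y * x = x * inv y
          · exact hx (mul_left_cancel (hQ2.trans hQ3.symm)).symm
          · -- survive : γ = 1
            have E := KE x y (x * inv y)
            rw [if_neg (fun hc => hy (mul_left_cancel hc).symm), if_pos rfl,
              if_neg (fun hc => c3kill hc),
              if_neg (fun hc => hx (mul_right_cancel hc)),
              if_neg (fun hc => kQ1 hc),
              if_neg (fun hc => hy (mul_left_cancel (hA3.symm.trans hc)).symm),
              if_neg hQ2, if_pos hQ3] at E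
            have hγδ : (σ y : R) * ((σ x : R) - 1) = 0 := by linear_combination E
            have hγ1 : (σ x : R) = 1 := sub_eq_zero.mp (unitcancel y _ hγδ)
            -- EQ(y, x*y)
            have hne' : y * (x*y) ≠ (x*y) * y := by
              intro hc
              apply hxy
              have h8 : (y*x)*y = (x*y)*y := by rw [← hc]; group
              exact (mul_right_cancel h8).symm
            have hss' : y⁻¹ * inv y = (x*y)⁻¹ * inv (x*y) := by
              rw [hmul]
              calc y⁻¹ * inv y = y⁻¹ * (x⁻¹ * (x * inv y)) := by group
                _ = y⁻¹ * (x⁻¹ * (inv y * inv x)) := by rw [hQ3]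
                _ = (x*y)⁻¹ * (inv y * inv x) := by group
            rcases lemEQ y (x*y) hne' hy hss' with hgrp | ⟨hr1, hr2⟩
            · rw [← hA3] at hgrp
              have h9 : y * (y * inv x) = y * (inv x * inv y) := by
                rw [hgrp]; group
              exact m1 ((mul_left_cancel h9).symm.trans hA3)
            · have hσz : (σ (x*y) : R) = (σ y : R) := by
                rw [σmul, hγ1, one_mul]
              rw [hσz] at hr2
              exact F1 (unitcancel y _ (by linear_combination hr2))
        · by_cases hQ2 : inv y * x = x * inv y
          · -- -2δ = 0
            have E := KE x y (x * inv y)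
            rw [if_neg (fun hc => hy (mul_left_cancel hc).symm), if_pos rfl,
              if_neg (fun hc => c3kill hc),
              if_neg (fun hc => hx (mul_right_cancel hc)),
              if_neg (fun hc => kQ1 hc),
              if_neg (fun hc => hy (mul_left_cancel (hA3.symm.trans hc)).symm),
              if_pos hQ2, if_neg hQ3] at E
            exact F1 (unitcancel y _ (by linear_combination -E))
          · have E := KE x y (x * inv y)
            rw [if_neg (fun hc => hy (mul_left_cancel hc).symm), if_pos rfl,
              if_neg (fun hc => c3kill hc),
              if_neg (fun hc => hx (mul_right_cancel hc)),
              if_neg (fun hc => kQ1 hc),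
              if_neg (fun hc => hy (mul_left_cancel (hA3.symm.trans hc)).symm),
              if_neg hQ2, if_neg hQ3] at E
            exact unitne y (by linear_combination -E)
      · -- A3, not B2, not B3
        by_cases hB4 : inv x * inv y = y * x
        · have E := KE x y (y*x)
          rw [if_neg (fun hc => hxy hc), if_neg hB2, if_neg hB3, if_pos hB4,
            if_pos rfl, if_neg (fun hc => hx (mul_left_cancel hc)),
            if_neg (fun hc => hy (mul_right_cancel hc)),
            if_neg (fun hc => m2 hc)] at E
          refine NEG (y*x) (by rw [hmul]; exact hB4) ?_
          rw [σmul]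
          linear_combination E
        · have E := KE x y (y*x)
          rw [if_neg (fun hc => hxy hc), if_neg hB2, if_neg hB3, if_neg hB4,
            if_pos rfl, if_neg (fun hc => hx (mul_left_cancel hc)),
            if_neg (fun hc => hy (mul_right_cancel hc)),
            if_neg (fun hc => m2 hc)] at E
          exact F0 (by linear_combination E)
    · -- not A3
      by_cases hA2 : inv y * x = x * y
      · by_cases hA4 : inv y * inv x = x * y
        · exact hx (mul_left_cancel (hA2.trans hA4.symm)).symm
        · -- δ = 1
          have E1 := KE x y (x*y)
          rw [if_pos rfl, if_neg (fun hc => hy (mul_left_cancel hc)),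
            if_neg (fun hc => hx (mul_right_cancel hc)),
            if_neg (fun hc => m1 hc), if_neg (fun hc => hxy hc.symm),
            if_neg hA3, if_pos hA2, if_neg hA4] at E1
          have hδ1 : (σ y : R) = 1 := by linear_combination -E1
          by_cases hB3 : inv x * y = y * x
          · -- KA2B3 kill
            apply hst
            have hixB : inv x = (y * x) * y⁻¹ := by rw [← hB3]; group
            have hiyA : inv y = (x * y) * x⁻¹ := by rw [← hA2]; group
            have h1 : (x⁻¹ * inv x)⁻¹ = y⁻¹ * inv y := by
              rw [← sAlt x, ← sAlt y, hixB, hiyA]; group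
            exact (sSelfInv x).symm.trans h1
          by_cases hB2 : x * inv y = y * x
          · -- LONG PATH P2
            have hiy2 : inv y = x⁻¹ * (y * x) := by rw [← hB2]; group
            have hC2 : inv y * inv x = inv x * y := by
              by_cases hC2' : inv y * inv x = inv x * y
              · exact hC2'
              exfalso
              by_cases hC1 : y * inv x = inv x * y
              · have E := KE x y (inv x * y)
                rw [if_neg (show ¬(x*y = inv x*y) from fun hc => hx (mul_right_cancel hc).symm),
                  if_neg (show ¬(x*inv y = inv x*y) from fun hc => hB3 (hB2.symm.trans hc).symm),
                  if_pos rfl,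
                  if_neg (show ¬(inv x*inv y = inv x*y) from fun hc => hy (mul_left_cancel hc)),
                  if_neg (show ¬(y*x = inv x*y) from fun hc => hB3 hc.symm),
                  if_pos hC1,
                  if_neg (show ¬(inv y*x = inv x*y) from
                    fun hc => hx (mul_right_cancel (hA2.symm.trans hc)).symm),
                  if_neg hC2'] at E
                exact F1 (unitcancel x _ (by linear_combination -E))
              · have E := KE x y (inv x * y)
                rw [if_neg (show ¬(x*y = inv x*y) from fun hc => hx (mul_right_cancel hc).symm),
                  if_neg (show ¬(x*inv y = inv x*y) from fun hc => hB3 (hB2.symm.trans hc).symm),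
                  if_pos rfl,
                  if_neg (show ¬(inv x*inv y = inv x*y) from fun hc => hy (mul_left_cancel hc)),
                  if_neg (show ¬(y*x = inv x*y) from fun hc => hB3 hc.symm),
                  if_neg hC1,
                  if_neg (show ¬(inv y*x = inv x*y) from
                    fun hc => hx (mul_right_cancel (hA2.symm.trans hc)).symm),
                  if_neg hC2'] at E
                exact unitne x (by linear_combination -E)
            have hD2 : y * inv x = inv x * inv y := by
              by_cases hD2' : y * inv x = inv x * inv y
              · exact hD2'
              exfalso
              by_cases hE2 : inv y * inv x = inv x * inv y
              · have E := KE x y (inv x * inv y)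
                rw [if_neg (show ¬(x*y = inv x*inv y) from fun hc => m1 hc.symm),
                  if_neg (show ¬(x*inv y = inv x*inv y) from
                    fun hc => hx (mul_right_cancel hc).symm),
                  if_neg (show ¬(inv x*y = inv x*inv y) from
                    fun hc => hy (mul_left_cancel hc).symm),
                  if_pos rfl,
                  if_neg (show ¬(y*x = inv x*inv y) from
                    fun hc => hx (mul_right_cancel (hB2.trans hc)).symm),
                  if_neg hD2',
                  if_neg (show ¬(inv y*x = inv x*inv y) from
                    fun hc => m1 (hA2.symm.trans hc).symm),
                  if_pos hE2] at E
                rw [hδ1] at E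
                exact F1 (unitcancel x _ (by linear_combination E))
              · have E := KE x y (inv x * inv y)
                rw [if_neg (show ¬(x*y = inv x*inv y) from fun hc => m1 hc.symm),
                  if_neg (show ¬(x*inv y = inv x*inv y) from
                    fun hc => hx (mul_right_cancel hc).symm),
                  if_neg (show ¬(inv x*y = inv x*inv y) from
                    fun hc => hy (mul_left_cancel hc).symm),
                  if_pos rfl,
                  if_neg (show ¬(y*x = inv x*inv y) from
                    fun hc => hx (mul_right_cancel (hB2.trans hc)).symm),
                  if_neg hD2',
                  if_neg (show ¬(inv y*x = inv x*inv y) from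
                    fun hc => m1 (hA2.symm.trans hc).symm),
                  if_neg hE2] at E
                exact unitne y (unitcancel x _ (by linear_combination E))
            have hsy2 : y * (x⁻¹ * inv x) = (x⁻¹ * inv x) * y := by
              have h1 : (y * (x⁻¹ * inv x)) * x = ((x⁻¹ * inv x) * y) * x := by
                calc (y * (x⁻¹ * inv x)) * x = y * ((x⁻¹ * inv x) * x) := by group
                  _ = y * inv x := by rw [sA]
                  _ = inv x * inv y := hD2
                  _ = inv x * (x⁻¹ * (y * x)) := by rw [hiy2]
                  _ = (inv x * x⁻¹) * (y * x) := by group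
                  _ = (x⁻¹ * inv x) * (y * x) := by rw [sAlt]
                  _ = ((x⁻¹ * inv x) * y) * x := by group
              exact mul_right_cancel h1
            have hsz : x⁻¹ * inv x = (x*y)⁻¹ * inv (x*y) := by
              rw [hmul]
              calc x⁻¹ * inv x = y⁻¹ * (y * (x⁻¹ * inv x)) := by group
                _ = y⁻¹ * ((x⁻¹ * inv x) * y) := by rw [hsy2]
                _ = y⁻¹ * (x⁻¹ * (inv x * y)) := by group
                _ = y⁻¹ * (x⁻¹ * (inv y * inv x)) := by rw [hC2]
                _ = (x*y)⁻¹ * (inv y * inv x) := by group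
            have hne'' : x * (x*y) ≠ (x*y) * x := by
              intro hc
              apply hxy
              have h8 : x * (x*y) = x * (y*x) := by rw [hc]; group
              exact mul_left_cancel h8
            rcases lemEQ x (x*y) hne'' hx hsz with hgrp | ⟨hr1, hr2⟩
            · apply hA3
              have h9 : x * (x*y) = x * (y * inv x) := by
                rw [hgrp]; group
              exact (mul_left_cancel h9).symm
            · have hσz : (σ (x*y) : R) = (σ x : R) := by
                rw [σmul, hδ1, mul_one]
              rw [hσz] at hr2
              exact F1 (unitcancel x _ (by linear_combination hr2))
          · by_cases hB4 : inv x * inv y = y * x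
            · have E := KE x y (y*x)
              rw [if_neg (fun hc => hxy hc), if_neg hB2, if_neg hB3, if_pos hB4,
                if_pos rfl, if_neg (fun hc => hx (mul_left_cancel hc)),
                if_neg (fun hc => hy (mul_right_cancel hc)),
                if_neg (fun hc => m2 hc)] at E
              refine NEG (y*x) (by rw [hmul]; exact hB4) ?_
              rw [σmul]
              linear_combination E
            · have E := KE x y (y*x)
              rw [if_neg (fun hc => hxy hc), if_neg hB2, if_neg hB3, if_neg hB4,
                if_pos rfl, if_neg (fun hc => hx (mul_left_cancel hc)),
                if_neg (fun hc => hy (mul_right_cancel hc)),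
                if_neg (fun hc => m2 hc)] at E
              exact F0 (by linear_combination E)
      · -- not A3, not A2
        by_cases hA4 : inv y * inv x = x * y
        · have E1 := KE x y (x*y)
          rw [if_pos rfl, if_neg (fun hc => hy (mul_left_cancel hc)),
            if_neg (fun hc => hx (mul_right_cancel hc)),
            if_neg (fun hc => m1 hc), if_neg (fun hc => hxy hc.symm),
            if_neg hA3, if_neg hA2, if_pos hA4] at E1
          refine NEG (x*y) (by rw [hmul]; exact hA4) ?_
          rw [σmul]
          linear_combination E1
        · have E1 := KE x y (x*y)
          rw [if_pos rfl, if_neg (fun hc => hy (mul_left_cancel hc)),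
            if_neg (fun hc => hx (mul_right_cancel hc)),
            if_neg (fun hc => m1 hc), if_neg (fun hc => hxy hc.symm),
            if_neg hA3, if_neg hA2, if_neg hA4] at E1
          exact F0 (by linear_combination E1)
  -- ASSEMBLY
  obtain ⟨a0, b0, hab⟩ : ∃ a b : G, a * b ≠ b * a := by
    by_contra h
    push_neg at h
    exact hnab h
  have hexw : ∃ w : G, inv w ≠ w := by
    by_contra hcon
    push_neg at hcon
    apply hnab
    intro a b
    calc a * b = inv (a * b) := (hcon (a*b)).symm
      _ = inv b * inv a := hmul a b
      _ = b * a := by rw [hcon, hcon]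
  obtain ⟨w, hw⟩ := hexw
  set s : G := w⁻¹ * inv w with hs_def
  have hs1 : s ≠ 1 := by
    intro hc
    exact hw (sOne w hc)
  have hss1 : s * s = 1 := sInvol w
  have hsinv1 : s⁻¹ = s := sSelfInv w
  have U : ∀ a : G, inv a ≠ a → a⁻¹ * inv a = s := by
    intro a ha
    by_cases hcomm : a * w = w * a
    · exact lemC a w hcomm ha hw
    · exact lemN1 a w hcomm ha hw
  have hkey : ∀ a : G, (inv a)⁻¹ * a = a⁻¹ * inv a := by
    intro a
    have h7 : inv a * ((inv a)⁻¹ * a) = inv a * (a⁻¹ * inv a) := by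
      calc inv a * ((inv a)⁻¹ * a) = a := by group
        _ = a⁻¹ * (a * a) := by group
        _ = a⁻¹ * (inv a * inv a) := by rw [L1b]
        _ = (a⁻¹ * inv a) * inv a := by group
        _ = (inv a * a⁻¹) * inv a := by rw [sAlt]
        _ = inv a * (a⁻¹ * inv a) := by group
    exact mul_left_cancel h7
  have central : ∀ g : G, g * s = s * g := by
    intro g
    by_cases hgw : w * g = g * w
    · exact (lemC2 w g hgw hw).symm
    · by_cases hg : inv g = g
      · have h1 : w * g = g * inv w := lemN2 w g hgw hw hg
        have hw' : inv (inv w) ≠ inv w := by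
          rw [hinv]
          exact fun hc => hw hc.symm
        by_cases hgw' : inv w * g = g * inv w
        · have h2 := lemC2 (inv w) g hgw' hw'
          have h3 : (inv w)⁻¹ * inv (inv w) = s := U (inv w) hw'
          rw [h3] at h2
          exact h2.symm
        · have h2 : inv w * g = g * inv (inv w) := lemN2 (inv w) g hgw' hw' hg
          rw [hinv] at h2
          have h4 : g⁻¹ * w * g = inv w := by
            calc g⁻¹ * w * g = g⁻¹ * (w * g) := by group
              _ = g⁻¹ * (g * inv w) := by rw [h1]
              _ = inv w := by group
          have h5 : g⁻¹ * w⁻¹ * g = (inv w)⁻¹ := by rw [← h4]; group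
          have h8 : w⁻¹ * g = g * (inv w)⁻¹ := by
            calc w⁻¹ * g = g * (g⁻¹ * w⁻¹ * g) := by group
              _ = g * (inv w)⁻¹ := by rw [h5]
          have h9 : (w⁻¹ * inv w) * g = g * (w⁻¹ * inv w) := by
            calc (w⁻¹ * inv w) * g = w⁻¹ * (inv w * g) := by group
              _ = w⁻¹ * (g * w) := by rw [h2]
              _ = (w⁻¹ * g) * w := by group
              _ = (g * (inv w)⁻¹) * w := by rw [h8]
              _ = g * ((inv w)⁻¹ * w) := by group
              _ = g * (w⁻¹ * inv w) := by rw [hkey]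
          exact h9.symm
      · have h3 : g⁻¹ * inv g = s := U g hg
        rw [← h3]
        exact (sB g).trans (sA g).symm
  have hsinv : inv s = s := by
    have hcom : Commute w (inv w) := L1a w
    calc inv s = inv (inv w) * inv (w⁻¹) := hmul _ _
      _ = w * (inv w)⁻¹ := by rw [hinv, inv_inv']
      _ = (inv w)⁻¹ * w := hcom.inv_right.eq
      _ = w⁻¹ * inv w := hkey w
  have hform : ∀ x : G, inv x = x ∨ inv x = s * x := by
    intro x
    by_cases hxx : inv x = x
    · exact Or.inl hxx
    · right
      have h1 : x⁻¹ * inv x = s := U x hxx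
      calc inv x = x * (x⁻¹ * inv x) := (sB x).symm
        _ = x * s := by rw [h1]
        _ = s * x := central x
  have hcmt : ∀ a b : G, a * b ≠ b * a → a * b = b * a * s := by
    intro a b hne
    have fin : inv (a*b) = b * a → a * b = b * a * s := by
      intro hinvz
      have hz : inv (a*b) ≠ a*b := by
        rw [hinvz]
        exact fun hc => hne hc.symm
      have hU := U (a*b) hz
      have h1 : b * a = (a*b) * s := by
        calc b * a = (a*b) * ((a*b)⁻¹ * inv (a*b)) := by rw [hinvz]; group
          _ = (a*b) * s := by rw [hU]
      calc a * b = (a * b) * (s * s) := by rw [hss1, mul_one]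
        _ = ((a*b) * s) * s := by group
        _ = (b * a) * s := by rw [← h1]
    by_cases ha : inv a = a
    · by_cases hb : inv b = b
      · exact fin (by rw [hmul, ha, hb])
      · have h1 : b * a = a * inv b := lemN2 b a (fun hc => hne hc.symm) hb ha
        have h2 : inv b = b * s := by
          calc inv b = b * (b⁻¹ * inv b) := (sB b).symm
            _ = b * s := by rw [U b hb]
        rw [h2] at h1
        calc a * b = (a * b) * (s * s) := by rw [hss1, mul_one]
          _ = (a * (b * s)) * s := by group
          _ = (b * a) * s := by rw [← h1]
    · by_cases hb : inv b = b
      · have h1 : a * b = b * inv a := lemN2 a b hne ha hb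
        have h2 : inv a = a * s := by
          calc inv a = a * (a⁻¹ * inv a) := (sB a).symm
            _ = a * s := by rw [U a ha]
        rw [h2] at h1
        calc a * b = b * (a * s) := h1
          _ = b * a * s := by group
      · apply fin
        have h2 : inv a = a * s := by
          calc inv a = a * (a⁻¹ * inv a) := (sB a).symm
            _ = a * s := by rw [U a ha]
        have h3 : inv b = b * s := by
          calc inv b = b * (b⁻¹ * inv b) := (sB b).symm
            _ = b * s := by rw [U b hb]
        calc inv (a*b) = inv b * inv a := hmul a b
          _ = (b * s) * (a * s) := by rw [h2, h3]
          _ = b * (s * a) * s := by group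
          _ = b * (a * s) * s := by rw [← central a]
          _ = (b * a) * (s * s) := by group
          _ = b * a := by rw [hss1, mul_one]
  have hcomm_mem : ∀ a b : G, a * b * a⁻¹ * b⁻¹ ∈ ({1, s} : Set G) := by
    intro a b
    by_cases hc : a * b = b * a
    · left
      calc a * b * a⁻¹ * b⁻¹ = (a*b) * a⁻¹ * b⁻¹ := by group
        _ = (b*a) * a⁻¹ * b⁻¹ := by rw [hc]
        _ = 1 := by group
    · right
      have h1 := hcmt a b hc
      calc a * b * a⁻¹ * b⁻¹ = (a*b) * a⁻¹ * b⁻¹ := by group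
        _ = ((b*a)*s) * a⁻¹ * b⁻¹ := by rw [h1]
        _ = b * a * (s * a⁻¹) * b⁻¹ := by group
        _ = b * a * (a⁻¹ * s) * b⁻¹ := by rw [central]
        _ = b * (s * b⁻¹) := by group
        _ = b * (b⁻¹ * s) := by rw [central]
        _ = s := by group
  have hcomm_s : a0 * b0 * a0⁻¹ * b0⁻¹ = s := by
    rcases hcomm_mem a0 b0 with h | h
    · exfalso
      apply hab
      have h2 : a0 * b0 * a0⁻¹ * b0⁻¹ = 1 := h
      calc a0 * b0 = (a0 * b0 * a0⁻¹ * b0⁻¹) * (b0 * a0) := by group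
        _ = 1 * (b0 * a0) := by rw [h2]
        _ = b0 * a0 := by group
    · exact h
  -- the subgroup {1, s}
  let Hsub : Subgroup G := {
    carrier := {1, s}
    one_mem' := Or.inl rfl
    mul_mem' := by
      rintro a b (rfl | ha) (rfl | hb)
      · left; rw [mul_one]
      · rw [hb, one_mul]; right; rfl
      · rw [ha, mul_one]; right; rfl
      · rw [ha, hb, hss1]; left; rfl
    inv_mem' := by
      rintro a (rfl | ha)
      · left; simp
      · rw [ha, hsinv1]; right; rfl }
  refine ⟨s, hs1, ?_, Subgroup.mem_center_iff.mpr central, hsinv,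
    (by rw [pow_two]; exact hss1), hform⟩
  have hle : commutator G ≤ Hsub := by
    rw [commutator_def, Subgroup.commutator_le]
    intro g1 _ g2 _
    exact hcomm_mem g1 g2
  have hge : s ∈ commutator G := by
    have hmem : a0 * b0 * a0⁻¹ * b0⁻¹ ∈ commutator G := by
      rw [commutator_def]
      exact Subgroup.commutator_mem_commutator (Subgroup.mem_top _) (Subgroup.mem_top _)
    rwa [hcomm_s] at hmem
  ext g
  simp only [SetLike.mem_coe, Set.mem_insert_iff, Set.mem_singleton_iff]
  constructor
  · intro hg
    exact hle hg
  · rintro (rfl | rfl)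
    · exact (commutator G).one_mem
    · exact hge
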